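/- Let x : ℕ → Fin b be a disjunctive sequence over an alphabet of size b (every finite word over Fin b occurs as a contiguous subword of x). Let G be a deterministic automaton on finite state set V over alphabet Fin b with a sink state ṽ reachable from every state. Then for any initial state v₀, there exists an index N such that running the automaton from v₀ on the first N symbols of x reaches ṽ. -/

import Mathlib

def run {V B : Type*} (δ : V → B → V) (v : V) (w : List B) : V :=
  w.foldl δ v

/-- `w` occurs in the sequence `x` at position `i`. -/
def OccursAt {b : ℕ} (x : ℕ → Fin b) (w : List (Fin b)) (i : ℕ) : Prop :=
  List.ofFn (fun j : Fin w.length => x (i + j)) = w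

/-- `x` is disjunctive: every finite word occurs as a contiguous subword. -/
def Disjunctive {b : ℕ} (x : ℕ → Fin b) : Prop :=
  ∀ w : List (Fin b), ∃ i : ℕ, OccursAt x w i

lemma run_append {V B : Type*} (δ : V → B → V) (v : V) (w₁ w₂ : List B) :
    run δ v (w₁ ++ w₂) = run δ (run δ v w₁) w₂ :=
  List.foldl_append ..

lemma run_sink {V B : Type*} (δ : V → B → V) (vs : V)
    (hsink : ∀ c : B, δ vs c = vs) (w : List B) : run δ vs w = vs := by
  induction w with
  | nil => rfl
  | cons a w ih => simpa [run, hsink] using ih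

lemma universal_word {b : ℕ} {V : Type*} [Fintype V]
    (δ : V → Fin b → V) (vs : V)
    (hsink : ∀ c : Fin b, δ vs c = vs)
    (hreach : ∀ v : V, ∃ w : List (Fin b), run δ v w = vs) :
    ∃ W : List (Fin b), ∀ v : V, run δ v W = vs := by
  classical
  have key : ∀ s : Finset V, ∃ W : List (Fin b), ∀ v ∈ s, run δ v W = vs := by
    intro s
    induction s using Finset.induction with
    | empty => exact ⟨[], by simp⟩
    | insert a s _ ih =>
      obtain ⟨W, hW⟩ := ih
      obtain ⟨w, hw⟩ := hreach (run δ a W)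
      refine ⟨W ++ w, ?_⟩
      intro v hv
      rcases Finset.mem_insert.mp hv with rfl | hv
      · rw [run_append, hw]
      · rw [run_append, hW v hv, run_sink δ vs hsink]
  obtain ⟨W, hW⟩ := key Finset.univ
  exact ⟨W, fun v => hW v (Finset.mem_univ v)⟩

/-- A disjunctive input sequence eventually drives any finite automaton
with a sink state reachable from every state into the sink state. -/
theorem disjunctive_reaches_sink
    {b : ℕ} {V : Type*} [Fintype V]
    (x : ℕ → Fin b) (hx : Disjunctive x)
    (δ : V → Fin b → V) (vs : V)
    (hsink : ∀ c : Fin b, δ vs c = vs)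
    (hreach : ∀ v : V, ∃ w : List (Fin b), run δ v w = vs)
    (v₀ : V) :
    ∃ N : ℕ, run δ v₀ (List.ofFn (fun j : Fin N => x j)) = vs := by
  obtain ⟨W, hW⟩ := universal_word δ vs hsink hreach
  obtain ⟨i, hi⟩ := hx W
  refine ⟨i + W.length, ?_⟩
  have hsplit : (List.ofFn (fun j : Fin (i + W.length) => x j))
      = (List.ofFn fun j : Fin i => x j) ++ (List.ofFn fun j : Fin W.length => x (i + j)) := by
    rw [List.ofFn_add]; rfl
  rw [hsplit, hi, run_append, hW]
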